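/- Let d ≥ 1 and let n_c be an integer with 1 ≤ n_c ≤ d. Let g ∈ ℝ^d have g_i ≠ 0 for every i. Let |g|_(1) ≥ |g|_(2) ≥ … ≥ |g|_(d) denote the decreasing rearrangement of (|g_1|, …, |g_d|), and let k be the smallest integer in {0, 1, …, n_c − 1} such that |g|_(k+1) · (n_c − k) ≤ Σ_{i=k+1}^d |g|_(i) (such a k exists). Let S_k be a set of k coordinates carrying the k largest values of |g_i| (consistent with the rearrangement), and define p ∈ ℝ^d by p_i = 1 for i ∈ S_k and p_i = |g_i| (n_c − k) / Σ_{j ∉ S_k} |g_j| for i ∉ S_k. Then p is feasible, i.e. 0 < p_i ≤ 1 for every i and Σ_{i=1}^d p_i ≤ n_c, and p minimizes the sparsification variance: for every q ∈ ℝ^d with 0 < q_i ≤ 1 for every i and Σ_{i=1}^d q_i ≤ n_c, one has Σ_{i=1}^d g_i²/p_i ≤ Σ_{i=1}^d g_i²/q_i. -/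

import Mathlib

open Finset

noncomputable section

/-- **Optimality of the importance-sampling probabilities (Proposition 1).**
Given `g ∈ ℝ^d` with all coordinates nonzero, a sorting permutation `τ` putting `|g|`
in decreasing order, and the smallest `k ∈ {0, …, n_c − 1}` such that
`|g|_(k+1) (n_c − k) ≤ Σ_{i=k+1}^d |g|_(i)`, the probability vector `p` defined by
`p_i = 1` on the top-`k` set and `p_i = |g_i|(n_c − k) / Σ_{j ∉ S_k} |g_j|` elsewhere
is feasible and minimizes the sparsification variance `Σ_i g_i² / p_i` over all
feasible probability vectors. -/
theorem optimal_sparsification_probabilities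
    (d nc : ℕ) (hd : 1 ≤ d) (hnc1 : 1 ≤ nc) (hncd : nc ≤ d)
    (g : Fin d → ℝ) (hg : ∀ i, g i ≠ 0)
    (τ : Equiv.Perm (Fin d))
    (hsort : ∀ i j : Fin d, i ≤ j → |g (τ j)| ≤ |g (τ i)|)
    (k : ℕ) (hk : k < nc)
    (hcond : |g (τ ⟨k, lt_of_lt_of_le hk hncd⟩)| * ((nc : ℝ) - (k : ℝ))
        ≤ ∑ i ∈ Finset.univ.filter (fun i : Fin d => k ≤ (i : ℕ)), |g (τ i)|)
    (hmin : ∀ k' : ℕ, ∀ hk' : k' < k,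
      ¬ (|g (τ ⟨k', by omega⟩)| * ((nc : ℝ) - (k' : ℝ))
        ≤ ∑ i ∈ Finset.univ.filter (fun i : Fin d => k' ≤ (i : ℕ)), |g (τ i)|))
    (p : Fin d → ℝ)
    (hp : ∀ i : Fin d, p i =
      if ((τ.symm i : Fin d) : ℕ) < k then 1
      else |g i| * ((nc : ℝ) - (k : ℝ)) /
        ∑ j ∈ Finset.univ.filter (fun j : Fin d => k ≤ ((τ.symm j : Fin d) : ℕ)), |g j|) :
    (∀ i, 0 < p i ∧ p i ≤ 1) ∧ (∑ i, p i ≤ (nc : ℝ)) ∧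
      (∀ q : Fin d → ℝ, (∀ i, 0 < q i ∧ q i ≤ 1) → (∑ i, q i ≤ (nc : ℝ)) →
        ∑ i, (g i) ^ 2 / p i ≤ ∑ i, (g i) ^ 2 / q i) := by
  have hkd : k < d := lt_of_lt_of_le hk hncd
  set T : ℝ := ∑ i ∈ Finset.univ.filter (fun i : Fin d => k ≤ (i : ℕ)), |g (τ i)| with hTdef
  set S : ℝ := ∑ j ∈ Finset.univ.filter
      (fun j : Fin d => k ≤ ((τ.symm j : Fin d) : ℕ)), |g j| with hSdef
  have hST : S = T := by
    rw [hSdef, hTdef]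
    exact Finset.sum_equiv τ.symm (by simp) (by simp)
  have hT_pos : 0 < T := by
    rw [hTdef]
    refine Finset.sum_pos' (fun i _ => abs_nonneg _) ⟨⟨k, hkd⟩, by simp, ?_⟩
    exact abs_pos.mpr (hg _)
  have hS_pos : 0 < S := hST ▸ hT_pos
  have hnck : (0:ℝ) < (nc : ℝ) - k := sub_pos.mpr (by exact_mod_cast hk)
  -- bound for non-top coordinates
  have hle : ∀ i : Fin d, k ≤ ((τ.symm i : Fin d) : ℕ) →
      |g i| ≤ |g (τ ⟨k, lt_of_lt_of_le hk hncd⟩)| := by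
    intro i hi
    have hgi : g i = g (τ (τ.symm i)) := by simp
    rw [hgi]
    exact hsort ⟨k, lt_of_lt_of_le hk hncd⟩ (τ.symm i) (Fin.le_def.mpr hi)
  -- feasibility
  have hfeas : ∀ i, 0 < p i ∧ p i ≤ 1 := by
    intro i
    rw [hp i]
    split_ifs with h
    · exact ⟨one_pos, le_refl 1⟩
    · push_neg at h
      refine ⟨div_pos (mul_pos (abs_pos.mpr (hg i)) hnck) hS_pos, ?_⟩
      rw [div_le_one hS_pos]
      calc |g i| * ((nc : ℝ) - k)
          ≤ |g (τ ⟨k, lt_of_lt_of_le hk hncd⟩)| * ((nc : ℝ) - k) :=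
            mul_le_mul_of_nonneg_right (hle i h) hnck.le
        _ ≤ T := hcond
        _ = S := hST.symm
  -- cardinality of the top set
  have hcard : (Finset.univ.filter
      (fun i : Fin d => ((τ.symm i : Fin d) : ℕ) < k)).card = k := by
    have h1 : (Finset.univ.filter (fun i : Fin d => ((τ.symm i : Fin d) : ℕ) < k)).card
        = (Finset.univ.filter (fun i : Fin d => (i : ℕ) < k)).card := by
      apply Finset.card_nbij' (fun i => τ.symm i) (fun j => τ j) <;> intro x hx <;> simpa using hx
    have h2 : (Finset.range d).filter (fun m => m < k) = Finset.range k := by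
      ext m; simp only [Finset.mem_filter, Finset.mem_range]; omega
    rw [h1, Finset.card_filter,
      Fin.sum_univ_eq_sum_range (fun m => if m < k then 1 else 0) d,
      ← Finset.card_filter, h2, Finset.card_range]
  -- sum of p equals nc
  have hsum_p : ∑ i, p i = (nc : ℝ) := by
    rw [← Finset.sum_filter_add_sum_filter_not Finset.univ
      (fun i : Fin d => ((τ.symm i : Fin d) : ℕ) < k) p]
    have hA : ∑ i ∈ Finset.univ.filter
        (fun i : Fin d => ((τ.symm i : Fin d) : ℕ) < k), p i = (k : ℝ) := by
      rw [Finset.sum_congr rfl (fun i hi => by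
        rw [hp i, if_pos (Finset.mem_filter.mp hi).2]), Finset.sum_const, hcard,
        nsmul_eq_mul, mul_one]
    have hBset : Finset.univ.filter (fun i : Fin d => ¬ ((τ.symm i : Fin d) : ℕ) < k)
        = Finset.univ.filter (fun i : Fin d => k ≤ ((τ.symm i : Fin d) : ℕ)) := by
      ext i; simp [not_lt]
    have hB : ∑ i ∈ Finset.univ.filter
        (fun i : Fin d => ¬ ((τ.symm i : Fin d) : ℕ) < k), p i = (nc : ℝ) - k := by
      rw [hBset, Finset.sum_congr rfl (fun i hi => by
        rw [hp i, if_neg (not_lt.mpr (Finset.mem_filter.mp hi).2)])]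
      rw [← Finset.sum_div, ← Finset.sum_mul, ← hSdef]
      field_simp
    rw [hA, hB]; ring
  refine ⟨hfeas, le_of_eq hsum_p, ?_⟩
  -- optimality
  intro q hq hqs
  set L : ℝ := S ^ 2 / ((nc : ℝ) - k) ^ 2 with hLdef
  have hL : 0 ≤ L := by positivity
  have key1 : ∀ i, g i ^ 2 / p i + g i ^ 2 / (p i) ^ 2 * (p i - q i) ≤ g i ^ 2 / q i := by
    intro i
    have hpi := (hfeas i).1
    have hqi := (hq i).1
    have hiden : g i ^ 2 / q i - (g i ^ 2 / p i + g i ^ 2 / (p i) ^ 2 * (p i - q i))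
        = g i ^ 2 * (p i - q i) ^ 2 / ((p i) ^ 2 * q i) := by
      field_simp
      ring
    have h0 : 0 ≤ g i ^ 2 * (p i - q i) ^ 2 / ((p i) ^ 2 * q i) := by positivity
    linarith
  have key2 : ∀ i, L * (p i - q i) ≤ g i ^ 2 / (p i) ^ 2 * (p i - q i) := by
    intro i
    rcases lt_or_ge ((τ.symm i : Fin d) : ℕ) k with h | h
    · -- top coordinate
      have hpi1 : p i = 1 := by rw [hp i, if_pos h]
      have h1q : 0 ≤ 1 - q i := by linarith [(hq i).2]
      have hki : 1 ≤ k := by omega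
      have hk1d : k - 1 < d := by omega
      have hmin' := hmin (k - 1) (by omega)
      push_neg at hmin'
      have hsplit : (Finset.univ.filter (fun i : Fin d => k - 1 ≤ (i : ℕ)))
          = insert (⟨k - 1, hk1d⟩ : Fin d)
            (Finset.univ.filter (fun i : Fin d => k ≤ (i : ℕ))) := by
        ext j
        simp only [Finset.mem_filter, Finset.mem_univ, true_and, Finset.mem_insert,
          Fin.ext_iff]
        omega
      rw [hsplit, Finset.sum_insert (by simp; omega), ← hTdef] at hmin'
      have hcast : ((k - 1 : ℕ) : ℝ) = (k : ℝ) - 1 := by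
        push_cast [hki]; ring
      rw [hcast] at hmin'
      have hexp : |g (τ ⟨k - 1, hk1d⟩)| * ((nc : ℝ) - ((k : ℝ) - 1))
          = |g (τ ⟨k - 1, hk1d⟩)| * ((nc : ℝ) - k) + |g (τ ⟨k - 1, hk1d⟩)| := by ring
      have haT : T < |g (τ ⟨k - 1, hk1d⟩)| * ((nc : ℝ) - k) := by
        rw [hexp] at hmin'; linarith
      have hgi : |g (τ ⟨k - 1, hk1d⟩)| ≤ |g i| := by
        have hgeq : g i = g (τ (τ.symm i)) := by simp
        rw [hgeq]
        exact hsort (τ.symm i) ⟨k - 1, hk1d⟩ (Fin.le_def.mpr (by simp; omega))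
      have hS_lt : S < |g i| * ((nc : ℝ) - k) := by
        rw [hST]
        exact lt_of_lt_of_le haT (mul_le_mul_of_nonneg_right hgi hnck.le)
      have hLle : L ≤ g i ^ 2 := by
        rw [hLdef, div_le_iff₀ (by positivity)]
        calc S ^ 2 ≤ (|g i| * ((nc : ℝ) - k)) ^ 2 :=
              pow_le_pow_left₀ hS_pos.le hS_lt.le 2
          _ = g i ^ 2 * ((nc : ℝ) - k) ^ 2 := by rw [mul_pow, sq_abs]
      rw [hpi1]
      norm_num
      exact mul_le_mul_of_nonneg_right hLle h1q
    · -- non-top coordinate : equality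
      have hpi : p i = |g i| * ((nc : ℝ) - k) / S := by
        rw [hp i, if_neg (not_lt.mpr h)]
      have hgi0 : |g i| ≠ 0 := abs_ne_zero.mpr (hg i)
      have heq : g i ^ 2 / (p i) ^ 2 = L := by
        rw [hLdef, hpi, div_pow, mul_pow, sq_abs]
        rw [div_div_eq_mul_div,
          mul_div_mul_left _ _ (pow_ne_zero 2 (hg i))]
      rw [heq]
  have hsum2 : L * ((∑ i, p i) - ∑ i, q i) ≤ ∑ i, g i ^ 2 / (p i) ^ 2 * (p i - q i) := by
    rw [← Finset.sum_sub_distrib, Finset.mul_sum]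
    exact Finset.sum_le_sum (fun i _ => key2 i)
  have h0 : 0 ≤ L * ((∑ i, p i) - ∑ i, q i) := by
    apply mul_nonneg hL
    rw [hsum_p]; linarith
  calc ∑ i, g i ^ 2 / p i
      ≤ ∑ i, (g i ^ 2 / p i + g i ^ 2 / (p i) ^ 2 * (p i - q i)) := by
        rw [Finset.sum_add_distrib]; linarith
    _ ≤ ∑ i, g i ^ 2 / q i := Finset.sum_le_sum (fun i _ => key1 i)
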